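/- arXiv:1708.02786 — 2 statements merged into one kernel-verified Lean document; each statement's English description precedes it below -/
import Mathlib

section
/- Let Θ_R be the randomised statistic built from i.i.d. ξ_1,…,ξ_R with CDF G and a deterministic positive scaling φ_R. Then there is a finite constant C₀, depending only on the density bound of G, on G(0), and on the first two absolute moments of F, such that |E(Θ_R) − 1| ≤ C₀ ( R φ_R^{-2} + φ_R^{-1} ) for every R and every φ_R > 0. -/
open MeasureTheory Filter ProbabilityTheory

/-- The randomised statistic
`Θ_R = ∫ | R^{-1/2} Σ_{j=1}^R (1{ξ_j ≤ u/φ_R} − G(0)) / √(G(0)(1−G(0))) |² dF(u)`. -/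
noncomputable def randStat {Ω₁ : Type*} (ξ : ℕ → Ω₁ → ℝ) (Rn : ℕ) (G0 : ℝ)
    (F : Measure ℝ) (φ : ℝ) (ω₁ : Ω₁) : ℝ :=
  ∫ u, ((∑ j ∈ Finset.range Rn, ((if ξ j ω₁ ≤ u / φ then (1 : ℝ) else 0) - G0)) /
      (Real.sqrt Rn * Real.sqrt (G0 * (1 - G0)))) ^ 2 ∂F

/-- `γ` has a density (w.r.t. Lebesgue measure) bounded by `mG`. -/
def HasBoundedDensity (γ : Measure ℝ) (mG : ℝ) : Prop :=
  ∃ d : ℝ → ℝ, (∀ x, 0 ≤ d x ∧ d x ≤ mG) ∧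
    γ = (volume : Measure ℝ).withDensity fun x => ENNReal.ofReal (d x)

lemma int_of_bound {Ω : Type*} [MeasurableSpace Ω] (μ : Measure Ω) [IsFiniteMeasure μ]
    {g : Ω → ℝ} (hg : Measurable g) (C : ℝ) (hb : ∀ ω, |g ω| ≤ C) : Integrable g μ :=
  (memLp_top_of_bound hg.aestronglyMeasurable C
    (ae_of_all _ (by simpa [Real.norm_eq_abs] using hb))).integrable le_top

lemma toReal_prob_le_one {γ : Measure ℝ} [IsProbabilityMeasure γ] (s : Set ℝ) :
    (γ s).toReal ≤ 1 := by
  have h := prob_le_one (μ := γ) (s := s)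
  simpa using ENNReal.toReal_mono ENNReal.one_ne_top h

lemma cdf_lipschitz {γ : Measure ℝ} [IsProbabilityMeasure γ] {mG : ℝ}
    (hdens : HasBoundedDensity γ mG) (a b : ℝ) :
    |(γ (Set.Iic a)).toReal - (γ (Set.Iic b)).toReal| ≤ mG * |a - b| := by
  have key : ∀ x y : ℝ, x ≤ y →
      (γ (Set.Iic y)).toReal - (γ (Set.Iic x)).toReal ≤ mG * (y - x) ∧
      (γ (Set.Iic x)).toReal ≤ (γ (Set.Iic y)).toReal := by
    intro x y hxy
    constructor
    · have hunion : Set.Iic x ∪ Set.Ioc x y = Set.Iic y := Set.Iic_union_Ioc_eq_Iic hxy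
      have hdisj : Disjoint (Set.Iic x) (Set.Ioc x y) := Set.Iic_disjoint_Ioc le_rfl
      have hadd : γ (Set.Iic y) = γ (Set.Iic x) + γ (Set.Ioc x y) := by
        rw [← hunion, measure_union hdisj measurableSet_Ioc]
      have hIoc : (γ (Set.Ioc x y)).toReal ≤ mG * (y - x) := by
        obtain ⟨d, hd, rfl⟩ := hdens
        rw [withDensity_apply _ measurableSet_Ioc]
        have hle : ∫⁻ z in Set.Ioc x y, ENNReal.ofReal (d z) ∂volume ≤
            ENNReal.ofReal (mG * (y - x)) := by
          calc ∫⁻ z in Set.Ioc x y, ENNReal.ofReal (d z) ∂volume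
              ≤ ∫⁻ _ in Set.Ioc x y, ENNReal.ofReal mG ∂volume :=
                lintegral_mono fun z => ENNReal.ofReal_le_ofReal (hd z).2
            _ = ENNReal.ofReal mG * volume (Set.Ioc x y) := setLIntegral_const _ _
            _ = ENNReal.ofReal (mG * (y - x)) := by
                rw [Real.volume_Ioc, ← ENNReal.ofReal_mul]
                exact (hd 0).1.trans (hd 0).2
        calc (∫⁻ z in Set.Ioc x y, ENNReal.ofReal (d z) ∂volume).toReal
            ≤ (ENNReal.ofReal (mG * (y - x))).toReal :=
              ENNReal.toReal_mono ENNReal.ofReal_ne_top hle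
          _ = mG * (y - x) := ENNReal.toReal_ofReal
              (mul_nonneg ((hd 0).1.trans (hd 0).2) (by linarith))
      rw [hadd, ENNReal.toReal_add (measure_ne_top _ _) (measure_ne_top _ _)]
      linarith
    · exact ENNReal.toReal_mono (measure_ne_top _ _) (measure_mono (Set.Iic_subset_Iic.2 hxy))
  rcases le_total a b with hab | hab
  · obtain ⟨h1, h2⟩ := key a b hab
    rw [abs_sub_comm, abs_of_nonneg (by linarith), abs_sub_comm, abs_of_nonneg (by linarith)]
    exact h1
  · obtain ⟨h1, h2⟩ := key b a hab
    rw [abs_of_nonneg (by linarith), abs_of_nonneg (by linarith)]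
    exact h1

lemma sum_sq_integral {Ω : Type*} [MeasurableSpace Ω] (μ : Measure Ω) [IsProbabilityMeasure μ]
    (γ : Measure ℝ) [IsProbabilityMeasure γ]
    (G0 : ℝ) (hG0pos : 0 < G0) (hG0lt : G0 < 1)
    (ξ : ℕ → Ω → ℝ) (hmeas : ∀ j, Measurable (ξ j))
    (hdist : ∀ j, μ.map (ξ j) = γ)
    (hindep : iIndepFun ξ μ) (t : ℝ) (R : ℕ) :
    ∫ ω, (∑ j ∈ Finset.range R, ((if ξ j ω ≤ t then (1 : ℝ) else 0) - G0)) ^ 2 ∂μ =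
      (R : ℝ) * ((γ (Set.Iic t)).toReal * (1 - (γ (Set.Iic t)).toReal)) +
      (R : ℝ) ^ 2 * ((γ (Set.Iic t)).toReal - G0) ^ 2 := by
  set p : ℝ := (γ (Set.Iic t)).toReal with hp
  set f : ℝ → ℝ := fun x => (if x ≤ t then (1 : ℝ) else 0) - G0 with hf
  have hfm : Measurable f :=
    (Measurable.ite measurableSet_Iic measurable_const measurable_const).sub measurable_const
  have hfb : ∀ x, |f x| ≤ 1 := by
    intro x
    rw [abs_le]
    by_cases h : x ≤ t <;> simp [hf, h] <;> constructor <;> linarith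
  have hXm : ∀ j, Measurable fun ω => f (ξ j ω) := fun j => hfm.comp (hmeas j)
  have hXb : ∀ j ω, |f (ξ j ω)| ≤ 1 := fun j ω => hfb _
  -- E of the indicator
  have hind : ∀ j, ∫ ω, (if ξ j ω ≤ t then (1 : ℝ) else 0) ∂μ = p := by
    intro j
    have heq : (fun ω => if ξ j ω ≤ t then (1 : ℝ) else 0) =
        (ξ j ⁻¹' Set.Iic t).indicator (1 : Ω → ℝ) := by
      funext ω
      by_cases h : ξ j ω ≤ t <;> simp [Set.indicator_apply, Set.mem_preimage, Set.mem_Iic, h]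
    rw [heq, integral_indicator_one (hmeas j measurableSet_Iic), measureReal_def,
      ← Measure.map_apply (hmeas j) measurableSet_Iic, hdist j]
  have hindInt : ∀ j, Integrable (fun ω => if ξ j ω ≤ t then (1 : ℝ) else 0) μ :=
    fun j => int_of_bound μ (Measurable.ite (hmeas j measurableSet_Iic)
      measurable_const measurable_const) 1 (by intro ω; by_cases h : ξ j ω ≤ t <;> simp [h])
  have hEX : ∀ j, ∫ ω, f (ξ j ω) ∂μ = p - G0 := by
    intro j
    rw [hf]
    simp only
    rw [integral_sub (hindInt j) (integrable_const _), hind j, integral_const]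
    simp
  -- expectation of products
  have key : ∀ i j, ∫ ω, f (ξ i ω) * f (ξ j ω) ∂μ =
      (p - G0) ^ 2 + (if i = j then p * (1 - p) else 0) := by
    intro i j
    rcases eq_or_ne i j with rfl | hij
    · have hsq : ∀ ω, f (ξ i ω) * f (ξ i ω) =
          (if ξ i ω ≤ t then (1 : ℝ) else 0) * (1 - 2 * G0) + G0 ^ 2 := by
        intro ω
        by_cases h : ξ i ω ≤ t <;> simp [hf, h] <;> ring
      simp only [hsq]
      rw [integral_add ((hindInt i).mul_const _) (integrable_const _),
        integral_mul_const, hind i, integral_const]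
      simp only [if_pos rfl, if_true, eq_self_iff_true, measure_univ, probReal_univ, ENNReal.toReal_one, smul_eq_mul, one_mul]
      ring
    · have hIF : IndepFun (fun ω => f (ξ i ω)) (fun ω => f (ξ j ω)) μ :=
        (hindep.indepFun hij).comp hfm hfm
      rw [hIF.integral_fun_mul_eq_mul_integral (hXm i).aestronglyMeasurable (hXm j).aestronglyMeasurable,
        hEX i, hEX j, if_neg hij]
      ring
  -- expand the square
  have hexp : ∀ ω, (∑ j ∈ Finset.range R, f (ξ j ω)) ^ 2 =
      ∑ i ∈ Finset.range R, ∑ j ∈ Finset.range R, f (ξ i ω) * f (ξ j ω) := by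
    intro ω
    rw [sq, Finset.sum_mul_sum]
  have hprodInt : ∀ i j : ℕ, Integrable (fun ω => f (ξ i ω) * f (ξ j ω)) μ := by
    intro i j
    refine int_of_bound μ ((hXm i).mul (hXm j)) 1 fun ω => ?_
    rw [abs_mul]
    exact mul_le_one₀ (hXb i ω) (abs_nonneg _) (hXb j ω)
  calc ∫ ω, (∑ j ∈ Finset.range R, f (ξ j ω)) ^ 2 ∂μ
      = ∫ ω, ∑ i ∈ Finset.range R, ∑ j ∈ Finset.range R, f (ξ i ω) * f (ξ j ω) ∂μ := by
        simp only [hexp]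
    _ = ∑ i ∈ Finset.range R, ∑ j ∈ Finset.range R, ∫ ω, f (ξ i ω) * f (ξ j ω) ∂μ := by
        rw [integral_finset_sum _ fun i _ => integrable_finset_sum _ fun j _ => hprodInt i j]
        exact Finset.sum_congr rfl fun i _ => integral_finset_sum _ fun j _ => hprodInt i j
    _ = ∑ i ∈ Finset.range R, ∑ j ∈ Finset.range R,
          ((p - G0) ^ 2 + if i = j then p * (1 - p) else 0) := by
        exact Finset.sum_congr rfl fun i _ => Finset.sum_congr rfl fun j _ => key i j
    _ = (R : ℝ) * (p * (1 - p)) + (R : ℝ) ^ 2 * (p - G0) ^ 2 := by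
        have hrow : ∀ i ∈ Finset.range R,
            ∑ j ∈ Finset.range R, ((p - G0) ^ 2 + if i = j then p * (1 - p) else 0) =
              (R : ℝ) * (p - G0) ^ 2 + p * (1 - p) := by
          intro i hi
          rw [Finset.sum_add_distrib, Finset.sum_const, Finset.card_range,
            Finset.sum_ite_eq, if_pos hi, nsmul_eq_mul]
        rw [Finset.sum_congr rfl hrow, Finset.sum_const, Finset.card_range, nsmul_eq_mul]
        ring

/-- for the randomised statistic `Θ_R` built from i.i.d. `ξ_1, …, ξ_R` with
CDF `G` (having a bounded density, `G(0) ∈ (0,1)`) and a deterministic positive scaling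
`φ_R`, there is a finite constant `C₀`, depending only on the density bound of `G`, on
`G(0)`, and on the first two absolute moments of `F`, such that
`|E(Θ_R) − 1| ≤ C₀ (R φ_R^{-2} + φ_R^{-1})` for every `R` (with at least one draw)
and every `φ_R > 0`. -/
theorem randStat_mean_bound
    {Ω : Type*} [MeasurableSpace Ω] (μ : Measure Ω) [IsProbabilityMeasure μ]
    (γ : Measure ℝ) [IsProbabilityMeasure γ] (mG : ℝ) (hdens : HasBoundedDensity γ mG)
    (G0 : ℝ) (hG0 : G0 = (γ (Set.Iic 0)).toReal) (hG0pos : 0 < G0) (hG0lt : G0 < 1)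
    (F : Measure ℝ) [IsProbabilityMeasure F]
    (hF1 : Integrable (fun u : ℝ => |u|) F) (hF2 : Integrable (fun u : ℝ => u ^ 2) F)
    (ξ : ℕ → Ω → ℝ) (hmeas : ∀ j, Measurable (ξ j))
    (hdist : ∀ j, μ.map (ξ j) = γ)
    (hindep : iIndepFun ξ μ) :
    ∃ C₀ : ℝ, 0 ≤ C₀ ∧ ∀ (φ : ℕ → ℝ), (∀ R, 0 < φ R) → ∀ R : ℕ, 1 ≤ R →
      |(∫ ω, randStat ξ R G0 F (φ R) ω ∂μ) - 1| ≤
        C₀ * ((R : ℝ) / (φ R) ^ 2 + (φ R)⁻¹) := by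
  obtain ⟨d, hd, -⟩ := id hdens
  have hmG : 0 ≤ mG := (hd 0).1.trans (hd 0).2
  set c : ℝ := G0 * (1 - G0) with hc_def
  have hc : 0 < c := mul_pos hG0pos (by linarith)
  set I1 : ℝ := ∫ u, |u| ∂F with hI1_def
  set I2 : ℝ := ∫ u, u ^ 2 ∂F with hI2_def
  have hI1 : 0 ≤ I1 := integral_nonneg fun u => abs_nonneg u
  have hI2 : 0 ≤ I2 := integral_nonneg fun u => sq_nonneg u
  refine ⟨(2 * mG * I1 + mG ^ 2 * I2) / c, div_nonneg
    (add_nonneg (mul_nonneg (mul_nonneg (by norm_num) hmG) hI1)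
      (mul_nonneg (sq_nonneg mG) hI2)) hc.le, ?_⟩
  intro φ hφ R hR
  have hφ0 : (0 : ℝ) < φ R := hφ R
  have hRpos : (0 : ℝ) < (R : ℝ) := by exact_mod_cast hR
  have hR0 : (R : ℝ) ≠ 0 := ne_of_gt hRpos
  set g : ℝ → Ω → ℝ := fun u ω =>
    (∑ j ∈ Finset.range R, ((if ξ j ω ≤ u / φ R then (1 : ℝ) else 0) - G0)) ^ 2 /
      ((R : ℝ) * c) with hg_def
  -- measurability of the uncurried function
  have hGm : Measurable (Function.uncurry g) := by
    have hsum : Measurable fun q : ℝ × Ω =>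
        ∑ j ∈ Finset.range R, ((if ξ j q.2 ≤ q.1 / φ R then (1 : ℝ) else 0) - G0) := by
      refine Finset.measurable_sum _ fun j _ => Measurable.sub ?_ measurable_const
      exact Measurable.ite (measurableSet_le ((hmeas j).comp measurable_snd)
        (measurable_fst.div_const _)) measurable_const measurable_const
    exact ((hsum.pow_const 2).div_const _)
  -- boundedness
  have hGb : ∀ q : ℝ × Ω, |Function.uncurry g q| ≤ (R : ℝ) / c := by
    intro q
    have hterm : ∀ j, |(if ξ j q.2 ≤ q.1 / φ R then (1 : ℝ) else 0) - G0| ≤ 1 := by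
      intro j
      by_cases h : ξ j q.2 ≤ q.1 / φ R <;> rw [abs_le] <;> simp [h] <;> constructor <;> linarith
    have hsum : |∑ j ∈ Finset.range R, ((if ξ j q.2 ≤ q.1 / φ R then (1 : ℝ) else 0) - G0)| ≤
        (R : ℝ) := by
      refine (Finset.abs_sum_le_sum_abs _ _).trans ?_
      calc ∑ j ∈ Finset.range R, |(if ξ j q.2 ≤ q.1 / φ R then (1 : ℝ) else 0) - G0|
          ≤ ∑ _j ∈ Finset.range R, (1 : ℝ) := Finset.sum_le_sum fun j _ => hterm j
        _ = (R : ℝ) := by simp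
    have h1 : Function.uncurry g q =
        (∑ j ∈ Finset.range R, ((if ξ j q.2 ≤ q.1 / φ R then (1 : ℝ) else 0) - G0)) ^ 2 /
          ((R : ℝ) * c) := rfl
    rw [h1, abs_of_nonneg (div_nonneg (sq_nonneg _) (mul_nonneg hRpos.le hc.le))]
    calc (∑ j ∈ Finset.range R, ((if ξ j q.2 ≤ q.1 / φ R then (1 : ℝ) else 0) - G0)) ^ 2 /
          ((R : ℝ) * c)
        ≤ (R : ℝ) ^ 2 / ((R : ℝ) * c) := by
          refine div_le_div_of_nonneg_right ?_ (mul_nonneg hRpos.le hc.le)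
          rw [← sq_abs]
          exact pow_le_pow_left₀ (abs_nonneg _) hsum 2
      _ = (R : ℝ) / c := by rw [sq, mul_div_mul_left _ _ hR0]
  have hGint : Integrable (Function.uncurry g) (F.prod μ) := int_of_bound _ hGm _ hGb
  -- rewrite randStat
  have hrand : ∀ ω, randStat ξ R G0 F (φ R) ω = ∫ u, g u ω ∂F := by
    intro ω
    unfold randStat
    refine integral_congr_ae (Eventually.of_forall fun u => ?_)
    rw [hg_def]
    simp only
    rw [div_pow, mul_pow, Real.sq_sqrt (Nat.cast_nonneg R), Real.sq_sqrt hc.le]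
  have hswap : ∫ ω, randStat ξ R G0 F (φ R) ω ∂μ = ∫ u, ∫ ω, g u ω ∂μ ∂F := by
    simp only [hrand]
    exact (integral_integral_swap hGint).symm
  set p : ℝ → ℝ := fun u => (γ (Set.Iic (u / φ R))).toReal with hp_def
  set h : ℝ → ℝ := fun u =>
    ((R : ℝ) * (p u * (1 - p u)) + (R : ℝ) ^ 2 * (p u - G0) ^ 2) / ((R : ℝ) * c) with hh_def
  have hinner : ∀ u, ∫ ω, g u ω ∂μ = h u := by
    intro u
    rw [hg_def, hh_def]
    simp only
    rw [integral_div, sum_sq_integral μ γ G0 hG0pos hG0lt ξ hmeas hdist hindep (u / φ R) R]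
  have hhint : Integrable h F := by
    have hint := hGint.integral_prod_left
    exact hint.congr (Eventually.of_forall hinner)
  have hmain : ∫ ω, randStat ξ R G0 F (φ R) ω ∂μ = ∫ u, h u ∂F := by
    rw [hswap]; exact integral_congr_ae (Eventually.of_forall hinner)
  rw [hmain]
  have hsub : (∫ u, h u ∂F) - 1 = ∫ u, (h u - 1) ∂F := by
    rw [integral_sub hhint (integrable_const 1), integral_const]; simp
  rw [hsub]
  -- pointwise bound
  have hpb : ∀ u, |h u - 1| ≤ (2 * mG / (φ R) / c) * |u| + (mG ^ 2 * R / (φ R) ^ 2 / c) * u ^ 2 := by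
    intro u
    have hq0 : 0 ≤ p u := ENNReal.toReal_nonneg
    have hq1 : p u ≤ 1 := toReal_prob_le_one _
    have hlip : |p u - G0| ≤ mG * (|u| / φ R) := by
      have hl := cdf_lipschitz hdens (u / φ R) 0
      rw [hp_def]
      simp only
      rw [hG0]
      simpa [abs_div, abs_of_pos hφ0] using hl
    have hmul : 0 ≤ mG * (|u| / φ R) :=
      mul_nonneg hmG (div_nonneg (abs_nonneg _) hφ0.le)
    have hhu : h u - 1 = (p u * (1 - p u) - c) / c + (R : ℝ) * (p u - G0) ^ 2 / c := by
      rw [hh_def]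
      simp only
      field_simp
      ring
    rw [hhu]
    have habs1 : |p u * (1 - p u) - c| ≤ 2 * (mG * (|u| / φ R)) := by
      have hfac : p u * (1 - p u) - c = (p u - G0) * (1 - p u - G0) := by
        rw [hc_def]; ring
      rw [hfac, abs_mul]
      have h2 : |1 - p u - G0| ≤ 2 := by rw [abs_le]; constructor <;> linarith
      calc |p u - G0| * |1 - p u - G0| ≤ (mG * (|u| / φ R)) * 2 :=
            mul_le_mul hlip h2 (abs_nonneg _) hmul
        _ = 2 * (mG * (|u| / φ R)) := by ring
    have habs2 : (p u - G0) ^ 2 ≤ mG ^ 2 * u ^ 2 / (φ R) ^ 2 := by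
      calc (p u - G0) ^ 2 = |p u - G0| ^ 2 := (sq_abs _).symm
        _ ≤ (mG * (|u| / φ R)) ^ 2 := pow_le_pow_left₀ (abs_nonneg _) hlip 2
        _ = mG ^ 2 * u ^ 2 / (φ R) ^ 2 := by rw [mul_pow, div_pow, sq_abs]; ring
    have hA : |(p u * (1 - p u) - c) / c| ≤ 2 * (mG * (|u| / φ R)) / c := by
      rw [abs_div, abs_of_pos hc]
      gcongr
    have hB : |(R : ℝ) * (p u - G0) ^ 2 / c| ≤ (R : ℝ) * (mG ^ 2 * u ^ 2 / (φ R) ^ 2) / c := by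
      rw [abs_of_nonneg (by positivity)]
      gcongr
    calc |(p u * (1 - p u) - c) / c + (R : ℝ) * (p u - G0) ^ 2 / c|
        ≤ |(p u * (1 - p u) - c) / c| + |(R : ℝ) * (p u - G0) ^ 2 / c| := abs_add_le _ _
      _ ≤ 2 * (mG * (|u| / φ R)) / c + (R : ℝ) * (mG ^ 2 * u ^ 2 / (φ R) ^ 2) / c :=
          add_le_add hA hB
      _ = (2 * mG / (φ R) / c) * |u| + (mG ^ 2 * R / (φ R) ^ 2 / c) * u ^ 2 := by ring
  have hBint1 : Integrable (fun u : ℝ => (2 * mG / (φ R) / c) * |u|) F := hF1.const_mul _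
  have hBint2 : Integrable (fun u : ℝ => (mG ^ 2 * R / (φ R) ^ 2 / c) * u ^ 2) F :=
    hF2.const_mul _
  calc |∫ u, (h u - 1) ∂F|
      ≤ ∫ u, |h u - 1| ∂F := by
        simpa [Real.norm_eq_abs] using norm_integral_le_integral_norm (μ := F) fun u => h u - 1
    _ ≤ ∫ u, ((2 * mG / (φ R) / c) * |u| + (mG ^ 2 * R / (φ R) ^ 2 / c) * u ^ 2) ∂F :=
        integral_mono (hhint.sub (integrable_const 1)).abs (hBint1.add hBint2) hpb
    _ = (2 * mG / (φ R) / c) * I1 + (mG ^ 2 * R / (φ R) ^ 2 / c) * I2 := by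
        rw [integral_add hBint1 hBint2, integral_const_mul, integral_const_mul]
    _ ≤ (2 * mG * I1 + mG ^ 2 * I2) / c * ((R : ℝ) / (φ R) ^ 2 + (φ R)⁻¹) := by
        have k1 : 2 * mG * I1 / c ≤ (2 * mG * I1 + mG ^ 2 * I2) / c := by
          gcongr
          exact le_add_of_nonneg_right (mul_nonneg (sq_nonneg mG) hI2)
        have k2 : mG ^ 2 * I2 / c ≤ (2 * mG * I1 + mG ^ 2 * I2) / c := by
          gcongr
          exact le_add_of_nonneg_left (mul_nonneg (mul_nonneg (by norm_num) hmG) hI1)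
        have e1 : (2 * mG / (φ R) / c) * I1 = (2 * mG * I1 / c) * (φ R)⁻¹ := by ring
        have e2 : (mG ^ 2 * R / (φ R) ^ 2 / c) * I2 =
            (mG ^ 2 * I2 / c) * ((R : ℝ) / (φ R) ^ 2) := by ring
        rw [e1, e2, mul_add]
        have t1 : (2 * mG * I1 / c) * (φ R)⁻¹ ≤
            ((2 * mG * I1 + mG ^ 2 * I2) / c) * (φ R)⁻¹ :=
          mul_le_mul_of_nonneg_right k1 (inv_nonneg.2 hφ0.le)
        have t2 : (mG ^ 2 * I2 / c) * ((R : ℝ) / (φ R) ^ 2) ≤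
            ((2 * mG * I1 + mG ^ 2 * I2) / c) * ((R : ℝ) / (φ R) ^ 2) :=
          mul_le_mul_of_nonneg_right k2 (div_nonneg hRpos.le (sq_nonneg _))
        linarith
end

section
/- Let Θ_R be the randomised statistic built from i.i.d. ξ_1,…,ξ_R with CDF G and a deterministic positive scaling φ_R, let δ > 0, suppose ∫|u|^{4+2δ} dF(u) < ∞, and suppose R^{1/2}/φ_R ≤ C for all R. Then sup_R E|Θ_R|^{2+δ} < ∞; i.e. the (2+δ)-th moments of Θ_R are uniformly bounded by a finite constant depending only on δ, C, the density bound of G, G(0), and ∫|u|^{4+2δ}dF(u). -/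
open MeasureTheory Filter ProbabilityTheory

noncomputable def momC : ℕ → ℝ
  | 0 => 1
  | (m+1) => 4 ^ (m+1) * (1 + momC m)

lemma momC_nonneg (m : ℕ) : 0 ≤ momC m := by
  induction m with
  | zero => norm_num [momC]
  | succ m ih => simp only [momC]; positivity

lemma pow_succ_bound (m R : ℕ) :
    ((R:ℝ)) ^ (m+1) + max ((R:ℝ) ^ m) 1 ≤ ((R:ℝ) + 1) ^ (m+1) := by
  rcases Nat.eq_zero_or_pos R with h | h
  · subst h
    push_cast
    rcases Nat.eq_zero_or_pos m with h' | h'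
    · subst h'; norm_num
    · rw [zero_pow (by omega), zero_pow (by omega)]
      norm_num
  · have h1 : (1:ℝ) ≤ (R:ℝ) := by exact_mod_cast h
    have hmax : max ((R:ℝ) ^ m) 1 = (R:ℝ) ^ m := max_eq_left (one_le_pow₀ h1)
    rw [hmax]
    have : ((R:ℝ)) ^ (m+1) + (R:ℝ) ^ m = ((R:ℝ) + 1) * (R:ℝ) ^ m := by ring
    rw [this]
    calc ((R:ℝ) + 1) * (R:ℝ) ^ m ≤ ((R:ℝ) + 1) * ((R:ℝ) + 1) ^ m := by
          apply mul_le_mul_of_nonneg_left (pow_le_pow_left₀ (by positivity) (by linarith) m)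
          linarith
      _ = ((R:ℝ) + 1) ^ (m+1) := by ring

lemma abs_pow_le_one_add (x : ℝ) {k m : ℕ} (h : k ≤ 2 * m) :
    |x| ^ k ≤ 1 + x ^ (2 * m) := by
  have hx2 : (0:ℝ) ≤ x ^ (2 * m) := by
    rw [pow_mul]; positivity
  rcases le_total |x| 1 with hx | hx
  · have := pow_le_one₀ (abs_nonneg x) hx (n := k)
    linarith
  · have h1 : |x| ^ k ≤ |x| ^ (2 * m) := pow_le_pow_right₀ hx h
    have h2 : |x| ^ (2 * m) = x ^ (2 * m) := by
      rw [← abs_pow, abs_of_nonneg hx2]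
    linarith [h1, h2 ▸ h1]

lemma sum_pow_moment_bound {Ω : Type*} [MeasurableSpace Ω] (μ : Measure Ω)
    [IsProbabilityMeasure μ] (Y : ℕ → Ω → ℝ) (hYmeas : ∀ j, Measurable (Y j))
    (hindep : iIndepFun Y μ)
    (hbd : ∀ j ω, |Y j ω| ≤ 1) (hmean : ∀ j, ∫ ω, Y j ω ∂μ = 0) (m : ℕ) :
    ∀ R : ℕ, ∫ ω, (∑ j ∈ Finset.range R, Y j ω) ^ (2 * m) ∂μ ≤ momC m * (R : ℝ) ^ m := by
  have habs0 : ∀ f : Ω → ℝ, |∫ ω, f ω ∂μ| ≤ ∫ ω, |f ω| ∂μ := fun f => by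
    simpa [Real.norm_eq_abs] using norm_integral_le_integral_norm (μ := μ) f
  -- generic facts
  have hSmeas : ∀ R : ℕ, Measurable (fun ω => ∑ j ∈ Finset.range R, Y j ω) :=
    fun R => Finset.measurable_sum _ (fun j _ => hYmeas j)
  have hSbd : ∀ (R : ℕ) ω, |∑ j ∈ Finset.range R, Y j ω| ≤ (R : ℝ) := by
    intro R ω
    calc |∑ j ∈ Finset.range R, Y j ω| ≤ ∑ j ∈ Finset.range R, |Y j ω| :=
          Finset.abs_sum_le_sum_abs _ _
      _ ≤ ∑ j ∈ Finset.range R, 1 := Finset.sum_le_sum (fun j _ => hbd j ω)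
      _ = (R : ℝ) := by simp
  have hint : ∀ (R k : ℕ), Integrable (fun ω => (∑ j ∈ Finset.range R, Y j ω) ^ k) μ := by
    intro R k
    refine Integrable.mono' (integrable_const ((R:ℝ) ^ k)) (((hSmeas R).pow_const k).aestronglyMeasurable) ?_
    filter_upwards with ω
    rw [Real.norm_eq_abs, abs_pow]
    exact pow_le_pow_left₀ (abs_nonneg _) (hSbd R ω) k
  have hYint : ∀ (j k : ℕ), Integrable (fun ω => Y j ω ^ k) μ := by
    intro j k
    refine Integrable.mono' (integrable_const 1) (((hYmeas j).pow_const k).aestronglyMeasurable) ?_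
    filter_upwards with ω
    rw [Real.norm_eq_abs, abs_pow]
    exact pow_le_one₀ (abs_nonneg _) (hbd j ω)
  have hYabs : ∀ (j k : ℕ), |∫ ω, Y j ω ^ k ∂μ| ≤ 1 := by
    intro j k
    calc |∫ ω, Y j ω ^ k ∂μ| ≤ ∫ ω, |Y j ω ^ k| ∂μ := habs0 _
      _ ≤ ∫ ω, (1:ℝ) ∂μ := by
          refine integral_mono ((hYint j k).abs) (integrable_const 1) (fun ω => ?_)
          rw [abs_pow]
          exact pow_le_one₀ (abs_nonneg _) (hbd j ω)
      _ = 1 := by simp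
  induction m with
  | zero =>
    intro R
    simp [momC]
  | succ m ihm =>
    intro R
    induction R with
    | zero =>
      simp [zero_pow (Nat.succ_ne_zero m), zero_pow (show 2 * (m+1) ≠ 0 by omega)]
    | succ R ihR =>
      have hABS : ∀ k : ℕ, k ≤ 2 * m →
          |∫ ω, (∑ j ∈ Finset.range R, Y j ω) ^ k ∂μ| ≤ 1 + momC m * (R:ℝ) ^ m := by
        intro k hk
        calc |∫ ω, (∑ j ∈ Finset.range R, Y j ω) ^ k ∂μ|
            ≤ ∫ ω, |(∑ j ∈ Finset.range R, Y j ω) ^ k| ∂μ := habs0 _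
          _ ≤ ∫ ω, (1 + (∑ j ∈ Finset.range R, Y j ω) ^ (2*m)) ∂μ := by
              refine integral_mono ((hint R k).abs) ((integrable_const 1).add (hint R (2*m)))
                (fun ω => ?_)
              rw [abs_pow]
              exact abs_pow_le_one_add _ hk
          _ = 1 + ∫ ω, (∑ j ∈ Finset.range R, Y j ω) ^ (2*m) ∂μ := by
              rw [integral_add (integrable_const 1) (hint R (2*m))]; simp
          _ ≤ 1 + momC m * (R:ℝ) ^ m := by linarith [ihm R]
      -- independence of partial sum and new variable
      have hST : IndepFun (fun ω => ∑ j ∈ Finset.range R, Y j ω) (Y R) μ := by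
        have := hindep.indepFun_finset_sum_of_notMem hYmeas
          (s := Finset.range R) (i := R) (by simp)
        convert this using 1
        ext ω
        simp
      have hSTk : ∀ a b : ℕ, ∫ ω, (∑ j ∈ Finset.range R, Y j ω) ^ a * Y R ω ^ b ∂μ =
          (∫ ω, (∑ j ∈ Finset.range R, Y j ω) ^ a ∂μ) * ∫ ω, Y R ω ^ b ∂μ := by
        intro a b
        exact (hST.comp (measurable_id.pow_const a) (measurable_id.pow_const b)).integral_fun_mul_eq_mul_integral
          (hint R a).aestronglyMeasurable (hYint R b).aestronglyMeasurable
      have hterm_int : ∀ k : ℕ, Integrable (fun ω =>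
          (∑ j ∈ Finset.range R, Y j ω) ^ k * Y R ω ^ (2*m+2-k) * (((2*m+2).choose k : ℕ) : ℝ)) μ := by
        intro k
        apply Integrable.mul_const
        refine Integrable.mono' (integrable_const ((R:ℝ) ^ k))
          ((((hSmeas R).pow_const k).mul ((hYmeas R).pow_const _)).aestronglyMeasurable) ?_
        filter_upwards with ω
        rw [Real.norm_eq_abs, abs_mul, abs_pow, abs_pow]
        calc |∑ j ∈ Finset.range R, Y j ω| ^ k * |Y R ω| ^ (2*m+2-k)
            ≤ (R:ℝ) ^ k * 1 := by
              apply mul_le_mul (pow_le_pow_left₀ (abs_nonneg _) (hSbd R ω) k)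
                (pow_le_one₀ (abs_nonneg _) (hbd R ω)) (by positivity) (by positivity)
          _ = (R:ℝ) ^ k := by ring
      have hexp : 2 * (m+1) = 2*m+2 := by ring
      have hstep : ∫ ω, (∑ j ∈ Finset.range (R+1), Y j ω) ^ (2*(m+1)) ∂μ =
          ∑ k ∈ Finset.range (2*m+2+1),
            (∫ ω, (∑ j ∈ Finset.range R, Y j ω) ^ k ∂μ) *
              (∫ ω, Y R ω ^ (2*m+2-k) ∂μ) * (((2*m+2).choose k : ℕ) : ℝ) := by
        have heq : (fun ω => (∑ j ∈ Finset.range (R+1), Y j ω) ^ (2*(m+1))) =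
            fun ω => ∑ k ∈ Finset.range (2*m+2+1),
              (∑ j ∈ Finset.range R, Y j ω) ^ k * Y R ω ^ (2*m+2-k) *
                (((2*m+2).choose k : ℕ) : ℝ) := by
          funext ω
          rw [Finset.sum_range_succ, hexp, add_pow]
        rw [heq, integral_finset_sum _ (fun k _ => hterm_int k)]
        exact Finset.sum_congr rfl fun k hk => by rw [integral_mul_const, hSTk]
      have hsplit2 : ∀ g : ℕ → ℝ, ∑ k ∈ Finset.range (2*m+2+1), g k =
          (∑ k ∈ Finset.range (2*m+1), g k) + g (2*m+1) + g (2*m+2) := by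
        intro g
        rw [show 2*m+2+1 = (2*m+1)+1+1 from by omega, Finset.sum_range_succ,
          Finset.sum_range_succ, show 2*m+1+1 = 2*m+2 from by omega]
      rw [hstep]
      simp only [hsplit2]
      rw [show 2*m+2-(2*m+1) = 1 from by omega, show 2*m+2-(2*m+2) = 0 from by omega]
      have hlast : (∫ ω, (∑ j ∈ Finset.range R, Y j ω) ^ (2*m+2) ∂μ) *
          (∫ ω, Y R ω ^ 0 ∂μ) * (((2*m+2).choose (2*m+2) : ℕ) : ℝ)
          ≤ momC (m+1) * (R:ℝ) ^ (m+1) := by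
        rw [Nat.choose_self]
        simp only [pow_zero, integral_const, measure_univ, ENNReal.toReal_one, probReal_univ, smul_eq_mul,
          mul_one, Nat.cast_one]
        have := ihR
        rw [hexp] at this
        exact this
      have hpen : (∫ ω, (∑ j ∈ Finset.range R, Y j ω) ^ (2*m+1) ∂μ) *
          (∫ ω, Y R ω ^ 1 ∂μ) * (((2*m+2).choose (2*m+1) : ℕ) : ℝ) = 0 := by
        simp only [pow_one, hmean R, mul_zero, zero_mul]
      have hmid : ∑ k ∈ Finset.range (2*m+1),
          (∫ ω, (∑ j ∈ Finset.range R, Y j ω) ^ k ∂μ) *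
            (∫ ω, Y R ω ^ (2*m+2-k) ∂μ) * (((2*m+2).choose k : ℕ) : ℝ)
          ≤ (1 + momC m * (R:ℝ) ^ m) * 4 ^ (m+1) := by
        have h3 : (0:ℝ) ≤ 1 + momC m * (R:ℝ) ^ m := by
          have := momC_nonneg m
          positivity
        calc ∑ k ∈ Finset.range (2*m+1),
              (∫ ω, (∑ j ∈ Finset.range R, Y j ω) ^ k ∂μ) *
                (∫ ω, Y R ω ^ (2*m+2-k) ∂μ) * (((2*m+2).choose k : ℕ) : ℝ)
            ≤ ∑ k ∈ Finset.range (2*m+1),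
              (1 + momC m * (R:ℝ) ^ m) * (((2*m+2).choose k : ℕ) : ℝ) := by
              refine Finset.sum_le_sum (fun k hk => ?_)
              have hk' : k ≤ 2*m := by
                have := Finset.mem_range.mp hk; omega
              have hc : (0:ℝ) ≤ (((2*m+2).choose k : ℕ) : ℝ) := Nat.cast_nonneg _
              calc (∫ ω, (∑ j ∈ Finset.range R, Y j ω) ^ k ∂μ) *
                    (∫ ω, Y R ω ^ (2*m+2-k) ∂μ) * (((2*m+2).choose k : ℕ) : ℝ)
                  ≤ |(∫ ω, (∑ j ∈ Finset.range R, Y j ω) ^ k ∂μ) *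
                    (∫ ω, Y R ω ^ (2*m+2-k) ∂μ) * (((2*m+2).choose k : ℕ) : ℝ)| := le_abs_self _
                _ = |∫ ω, (∑ j ∈ Finset.range R, Y j ω) ^ k ∂μ| *
                    |∫ ω, Y R ω ^ (2*m+2-k) ∂μ| * (((2*m+2).choose k : ℕ) : ℝ) := by
                    rw [abs_mul, abs_mul, abs_of_nonneg hc]
                _ ≤ (1 + momC m * (R:ℝ) ^ m) * 1 * (((2*m+2).choose k : ℕ) : ℝ) := by
                    apply mul_le_mul_of_nonneg_right _ hc
                    exact mul_le_mul (hABS k hk') (hYabs R _) (abs_nonneg _) h3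
                _ = (1 + momC m * (R:ℝ) ^ m) * (((2*m+2).choose k : ℕ) : ℝ) := by ring
          _ = (1 + momC m * (R:ℝ) ^ m) * ∑ k ∈ Finset.range (2*m+1), (((2*m+2).choose k : ℕ) : ℝ) := by
              rw [Finset.mul_sum]
          _ ≤ (1 + momC m * (R:ℝ) ^ m) * ∑ k ∈ Finset.range (2*m+3), (((2*m+2).choose k : ℕ) : ℝ) := by
              apply mul_le_mul_of_nonneg_left _ h3
              apply Finset.sum_le_sum_of_subset_of_nonneg
                (Finset.range_subset_range.mpr (by omega)) (fun _ _ _ => Nat.cast_nonneg _)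
          _ = (1 + momC m * (R:ℝ) ^ m) * 4 ^ (m+1) := by
              congr 1
              have h5 : ∑ k ∈ Finset.range (2*m+3), (((2*m+2).choose k : ℕ) : ℝ)
                  = ((∑ k ∈ Finset.range (2*m+2+1), (2*m+2).choose k : ℕ) : ℝ) := by
                push_cast
                rfl
              rw [h5, Nat.sum_range_choose]
              have : (4:ℝ) ^ (m+1) = 2 ^ (2*m+2) := by
                rw [show (4:ℝ) = 2^2 by norm_num, ← pow_mul]
                ring_nf
              rw [this]
              push_cast
              ring
      have h4 : (1 + momC m * (R:ℝ) ^ m) * 4 ^ (m+1) ≤ momC (m+1) * max ((R:ℝ) ^ m) 1 := by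
        simp only [momC]
        have hm0 := momC_nonneg m
        have hmax1 : (1:ℝ) ≤ max ((R:ℝ) ^ m) 1 := le_max_right _ _
        have hmax2 : (R:ℝ) ^ m ≤ max ((R:ℝ) ^ m) 1 := le_max_left _ _
        have h4p : (0:ℝ) < 4 ^ (m+1) := by positivity
        nlinarith [mul_nonneg hm0 (sub_nonneg.mpr hmax2),
          mul_nonneg (le_of_lt h4p) (mul_nonneg hm0 (sub_nonneg.mpr hmax2)),
          mul_nonneg (le_of_lt h4p) (sub_nonneg.mpr hmax1)]
      have key := pow_succ_bound m R
      have hmom1 := momC_nonneg (m+1)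
      have hfin : momC (m+1) * (R:ℝ) ^ (m+1) + momC (m+1) * max ((R:ℝ) ^ m) 1
          ≤ momC (m+1) * (((R:ℕ):ℝ) + 1) ^ (m+1) := by
        rw [← mul_add]
        exact mul_le_mul_of_nonneg_left key hmom1
      push_cast
      linarith


lemma rpow_add_le_two_rpow {x y p : ℝ} (hx : 0 ≤ x) (hy : 0 ≤ y) (hp : 0 ≤ p) :
    (x + y) ^ p ≤ 2 ^ p * (x ^ p + y ^ p) := by
  have h1 : x + y ≤ 2 * max x y := by
    rcases le_total x y with h | h
    · rw [max_eq_right h]; linarith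
    · rw [max_eq_left h]; linarith
  have hmax : 0 ≤ max x y := le_trans hx (le_max_left _ _)
  calc (x + y) ^ p ≤ (2 * max x y) ^ p :=
        Real.rpow_le_rpow (by linarith) h1 hp
    _ = 2 ^ p * (max x y) ^ p := Real.mul_rpow (by norm_num) hmax
    _ ≤ 2 ^ p * (x ^ p + y ^ p) := by
        apply mul_le_mul_of_nonneg_left _ (Real.rpow_nonneg (by norm_num) p)
        rcases max_cases x y with ⟨h2, _⟩ | ⟨h2, _⟩ <;> rw [h2]
        · linarith [Real.rpow_nonneg hy p]
        · linarith [Real.rpow_nonneg hx p]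

lemma rpow_le_one_add_pow {x p : ℝ} {n : ℕ} (hx : 0 ≤ x) (hp : 0 ≤ p) (h : p ≤ n) :
    x ^ p ≤ 1 + x ^ n := by
  rcases le_total x 1 with h1 | h1
  · have := Real.rpow_le_one hx h1 hp
    have := pow_nonneg hx n
    linarith
  · have h2 : x ^ p ≤ x ^ (n : ℝ) := Real.rpow_le_rpow_of_exponent_le h1 h
    rw [Real.rpow_natCast] at h2
    linarith

lemma sq_le_one_add_abs_rpow (u : ℝ) {q : ℝ} (hq : 2 ≤ q) : u ^ 2 ≤ 1 + |u| ^ q := by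
  have h0 : u ^ 2 = |u| ^ 2 := (sq_abs u).symm
  rcases le_total |u| 1 with h1 | h1
  · have ha := pow_le_one₀ (abs_nonneg u) h1 (n := 2)
    have hb := Real.rpow_nonneg (abs_nonneg u) q
    rw [h0]
    linarith
  · have h2 : |u| ^ ((2:ℕ) : ℝ) ≤ |u| ^ q := by
      apply Real.rpow_le_rpow_of_exponent_le h1
      push_cast; linarith
    rw [Real.rpow_natCast] at h2
    rw [h0]
    linarith



lemma cdf_diff_le {γ : Measure ℝ} [IsProbabilityMeasure γ] {mG : ℝ}
    (hdens : HasBoundedDensity γ mG) (t : ℝ) :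
    |(γ (Set.Iic t)).toReal - (γ (Set.Iic 0)).toReal| ≤ mG * |t| := by
  obtain ⟨d, hd, hγ⟩ := hdens
  have hmG0 : 0 ≤ mG := le_trans (hd 0).1 (hd 0).2
  have key : ∀ a c : ℝ, a ≤ c → γ (Set.Ioc a c) ≤ ENNReal.ofReal (mG * (c - a)) := by
    intro a c hac
    rw [hγ, withDensity_apply _ measurableSet_Ioc]
    calc ∫⁻ x in Set.Ioc a c, ENNReal.ofReal (d x) ∂volume
        ≤ ∫⁻ _ in Set.Ioc a c, ENNReal.ofReal mG ∂volume :=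
          lintegral_mono (fun x => ENNReal.ofReal_le_ofReal (hd x).2)
      _ = ENNReal.ofReal mG * volume (Set.Ioc a c) := setLIntegral_const _ _
      _ = ENNReal.ofReal (mG * (c - a)) := by
          rw [Real.volume_Ioc, ← ENNReal.ofReal_mul hmG0]
  rcases le_total 0 t with ht | ht
  · have hsplit : γ (Set.Iic t) = γ (Set.Iic 0) + γ (Set.Ioc 0 t) := by
      rw [← Set.Iic_union_Ioc_eq_Iic ht,
        measure_union (Set.Iic_disjoint_Ioc le_rfl) measurableSet_Ioc]
    have h1 : (γ (Set.Iic t)).toReal - (γ (Set.Iic 0)).toReal = (γ (Set.Ioc 0 t)).toReal := by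
      rw [hsplit, ENNReal.toReal_add (measure_ne_top _ _) (measure_ne_top _ _)]
      ring
    rw [h1, abs_of_nonneg ENNReal.toReal_nonneg, abs_of_nonneg ht]
    have := key 0 t ht
    rw [sub_zero] at this
    exact ENNReal.toReal_le_of_le_ofReal (by positivity) this
  · have hsplit : γ (Set.Iic 0) = γ (Set.Iic t) + γ (Set.Ioc t 0) := by
      rw [← Set.Iic_union_Ioc_eq_Iic ht,
        measure_union (Set.Iic_disjoint_Ioc le_rfl) measurableSet_Ioc]
    have h1 : (γ (Set.Iic 0)).toReal - (γ (Set.Iic t)).toReal = (γ (Set.Ioc t 0)).toReal := by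
      rw [hsplit, ENNReal.toReal_add (measure_ne_top _ _) (measure_ne_top _ _)]
      ring
    rw [abs_sub_comm, h1, abs_of_nonneg ENNReal.toReal_nonneg, abs_of_nonpos ht]
    have := key t 0 ht
    rw [zero_sub] at this
    exact ENNReal.toReal_le_of_le_ofReal (mul_nonneg hmG0 (by linarith)) this

set_option maxHeartbeats 2000000 in
/-- for the randomised statistic `Θ_R` built from i.i.d. `ξ_1, …, ξ_R` with CDF
`G` (having a bounded density, `G(0) ∈ (0,1)`) and a deterministic positive scaling `φ_R`, if
`δ > 0`, `∫|u|^{4+2δ} dF(u) < ∞` and `R^{1/2}/φ_R ≤ C` for all `R`, then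
`sup_R E|Θ_R|^{2+δ} < ∞`: the `(2+δ)`-th moments of `Θ_R` are uniformly bounded by a finite
constant (depending only on `δ`, `C`, the density bound of `G`, `G(0)` and
`∫|u|^{4+2δ} dF(u)`). -/
theorem randStat_uniform_moment_bound
    {Ω : Type*} [MeasurableSpace Ω] (μ : Measure Ω) [IsProbabilityMeasure μ]
    (γ : Measure ℝ) [IsProbabilityMeasure γ] (mG : ℝ) (hdens : HasBoundedDensity γ mG)
    (G0 : ℝ) (hG0 : G0 = (γ (Set.Iic 0)).toReal) (hG0pos : 0 < G0) (hG0lt : G0 < 1)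
    (F : Measure ℝ) [IsProbabilityMeasure F]
    (δ : ℝ) (hδ : 0 < δ)
    (hF : Integrable (fun u : ℝ => |u| ^ ((4 : ℝ) + 2 * δ)) F)
    (φ : ℕ → ℝ) (hφpos : ∀ R, 0 < φ R)
    (C : ℝ) (hφC : ∀ R : ℕ, Real.sqrt R / φ R ≤ C)
    (ξ : ℕ → Ω → ℝ) (hmeas : ∀ j, Measurable (ξ j))
    (hdist : ∀ j, μ.map (ξ j) = γ)
    (hindep : iIndepFun ξ μ) :
    ∃ M : ℝ, ∀ R : ℕ, 1 ≤ R →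
      (∫ ω, |randStat ξ R G0 F (φ R) ω| ^ ((2 : ℝ) + δ) ∂μ) ≤ M := by
  classical
  have hmG0 : 0 ≤ mG := by
    obtain ⟨d, hd, _⟩ := hdens
    exact le_trans (hd 0).1 (hd 0).2
  set σ2 : ℝ := G0 * (1 - G0) with hσ2def
  have hσ2pos : 0 < σ2 := mul_pos hG0pos (by linarith)
  set p : ℝ → ℝ := fun t => (γ (Set.Iic t)).toReal with hpdef
  have hpmono : Monotone p := fun s t hst =>
    ENNReal.toReal_mono (measure_ne_top _ _) (measure_mono (Set.Iic_subset_Iic.mpr hst))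
  have hpmeas : Measurable p := hpmono.measurable
  have hp0 : ∀ t, 0 ≤ p t := fun t => ENNReal.toReal_nonneg
  have hp1 : ∀ t, p t ≤ 1 := fun t => by
    simpa using ENNReal.toReal_mono (by simp) (prob_le_one (μ := γ) (s := Set.Iic t))
  have hG0p : G0 = p 0 := hG0
  have hpdiff : ∀ t, |p t - p 0| ≤ mG * |t| := fun t => cdf_diff_le hdens t
  -- indicator facts
  have hifmeas : ∀ (j : ℕ) (t : ℝ), Measurable (fun ω => if ξ j ω ≤ t then (1:ℝ) else 0) :=
    fun j t => Measurable.ite (measurableSet_le (hmeas j) measurable_const)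
      measurable_const measurable_const
  have hif_int : ∀ (j : ℕ) (t : ℝ), ∫ ω, (if ξ j ω ≤ t then (1:ℝ) else 0) ∂μ = p t := by
    intro j t
    have heq : (fun ω => if ξ j ω ≤ t then (1:ℝ) else 0)
        = Set.indicator {ω | ξ j ω ≤ t} (fun _ => (1:ℝ)) := by
      funext ω
      by_cases h : ξ j ω ≤ t <;> simp [Set.indicator_apply, h]
    rw [heq, integral_indicator_const _ (measurableSet_le (hmeas j) measurable_const)]
    have hμmap : μ {ω | ξ j ω ≤ t} = γ (Set.Iic t) := by
      rw [← hdist j, Measure.map_apply (hmeas j) measurableSet_Iic]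
      rfl
    rw [measureReal_def, hμmap]
    simp [hpdef]
  have hYbd : ∀ (t : ℝ) (j : ℕ) ω, |(if ξ j ω ≤ t then (1:ℝ) else 0) - p t| ≤ 1 := by
    intro t j ω
    have h1 := hp0 t
    have h2 := hp1 t
    rw [abs_le]
    by_cases h : ξ j ω ≤ t <;> simp [h] <;> constructor <;> linarith
  have hYint1 : ∀ (t : ℝ) (j : ℕ), Integrable (fun ω => if ξ j ω ≤ t then (1:ℝ) else 0) μ := by
    intro t j
    refine Integrable.mono' (integrable_const 1) (hifmeas j t).aestronglyMeasurable ?_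
    filter_upwards with ω
    rw [Real.norm_eq_abs]
    by_cases h : ξ j ω ≤ t <;> simp [h]
  have hYmean : ∀ (t : ℝ) (j : ℕ), ∫ ω, ((if ξ j ω ≤ t then (1:ℝ) else 0) - p t) ∂μ = 0 := by
    intro t j
    rw [integral_sub (hYint1 t j) (integrable_const _), hif_int j t, integral_const]
    simp
  have hYindep : ∀ t : ℝ, iIndepFun
      (fun (j : ℕ) (ω : Ω) => (if ξ j ω ≤ t then (1:ℝ) else 0) - p t) μ := by
    intro t
    have hg : Measurable (fun x : ℝ => (if x ≤ t then (1:ℝ) else 0) - p t) :=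
      (Measurable.ite measurableSet_Iic measurable_const measurable_const).sub measurable_const
    exact hindep.comp _ (fun _ => hg)
  have hmom : ∀ (t : ℝ) (n R : ℕ),
      ∫ ω, (∑ j ∈ Finset.range R, ((if ξ j ω ≤ t then (1:ℝ) else 0) - p t)) ^ (2*n) ∂μ
        ≤ momC n * (R:ℝ) ^ n :=
    fun t n R => sum_pow_moment_bound μ _ (fun j => ((hifmeas j t).sub measurable_const))
      (hYindep t) (hYbd t) (hYmean t) n R
  -- u² integrable
  have hu2meas : Measurable (fun u : ℝ => u ^ 2) := measurable_id.pow_const 2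
  have hu2int : Integrable (fun u : ℝ => u ^ 2) F := by
    refine Integrable.mono' ((integrable_const 1).add hF) hu2meas.aestronglyMeasurable ?_
    filter_upwards with u
    rw [Real.norm_eq_abs, abs_of_nonneg (sq_nonneg u)]
    exact sq_le_one_add_abs_rpow u (by linarith)
  -- constants
  set n : ℕ := ⌈(2:ℝ) + δ⌉₊ with hndef
  have hn : (2:ℝ) + δ ≤ n := Nat.le_ceil _
  have hp0' : (0:ℝ) ≤ 2 + δ := by linarith
  have hC0 : 0 ≤ C := le_trans (div_nonneg (Real.sqrt_nonneg _) (hφpos 1).le) (hφC 1)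
  set b : ℝ := (2*mG^2*C^2/σ2) * ∫ u, u ^ 2 ∂F with hbdef
  have hb0 : 0 ≤ b := mul_nonneg (by positivity) (integral_nonneg fun u => sq_nonneg u)
  refine ⟨2^((2:ℝ)+δ) * (1 + (2/σ2)^n * momC n + b^((2:ℝ)+δ)), fun R hR => ?_⟩
  have hRpos : (0:ℝ) < R := by exact_mod_cast hR
  have hR0 : (R:ℝ) ≠ 0 := ne_of_gt hRpos
  have hs0 : σ2 ≠ 0 := ne_of_gt hσ2pos
  have hφR := hφpos R
  -- centered kernel, jointly measurable
  set A : Ω × ℝ → ℝ := fun x => ∑ j ∈ Finset.range R,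
    ((if ξ j x.1 ≤ x.2 / φ R then (1:ℝ) else 0) - p (x.2 / φ R)) with hAdef
  have hAmeas : Measurable A := by
    apply Finset.measurable_sum
    intro j _
    refine Measurable.sub ?_ (hpmeas.comp (measurable_snd.div_const _))
    exact Measurable.ite (measurableSet_le ((hmeas j).comp measurable_fst)
      (measurable_snd.div_const _)) measurable_const measurable_const
  have hAbd : ∀ x, |A x| ≤ (R:ℝ) := by
    intro x
    calc |A x| ≤ ∑ j ∈ Finset.range R,
          |(if ξ j x.1 ≤ x.2 / φ R then (1:ℝ) else 0) - p (x.2 / φ R)| :=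
          Finset.abs_sum_le_sum_abs _ _
      _ ≤ ∑ j ∈ Finset.range R, 1 := Finset.sum_le_sum (fun j _ => hYbd _ j x.1)
      _ = (R:ℝ) := by simp
  have hAsec : ∀ ω, Measurable (fun u => A (ω, u)) := fun ω =>
    hAmeas.comp measurable_prodMk_left
  have hA2bd : ∀ x, A x ^ 2 ≤ (R:ℝ) ^ 2 := by
    intro x
    rw [← sq_abs]
    exact pow_le_pow_left₀ (abs_nonneg _) (hAbd x) 2
  set θA : Ω → ℝ := fun ω => ∫ u, (2/((R:ℝ)*σ2)) * A (ω,u) ^ 2 ∂F with hθdef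
  have hcnn : (0:ℝ) ≤ 2/((R:ℝ)*σ2) := by positivity
  have hfi_all : ∀ ω, Integrable (fun u => (2/((R:ℝ)*σ2)) * A (ω,u) ^ 2) F := by
    intro ω
    refine Integrable.mono' (integrable_const ((2/((R:ℝ)*σ2)) * (R:ℝ)^2))
      (((hAsec ω).pow_const 2).const_mul _).aestronglyMeasurable ?_
    filter_upwards with u
    rw [Real.norm_eq_abs, abs_mul, abs_of_nonneg hcnn, abs_of_nonneg (sq_nonneg _)]
    exact mul_le_mul_of_nonneg_left (hA2bd (ω,u)) hcnn
  have hθA_nonneg : ∀ ω, 0 ≤ θA ω := fun ω => integral_nonneg fun u => by positivity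
  have hθA_bd : ∀ ω, θA ω ≤ (2/((R:ℝ)*σ2)) * (R:ℝ)^2 := by
    intro ω
    calc θA ω ≤ ∫ _u, (2/((R:ℝ)*σ2)) * (R:ℝ)^2 ∂F :=
          integral_mono (hfi_all ω) (integrable_const _)
            (fun u => mul_le_mul_of_nonneg_left (hA2bd (ω,u)) hcnn)
      _ = (2/((R:ℝ)*σ2)) * (R:ℝ)^2 := by simp
  have hθA_meas : StronglyMeasurable θA :=
    (((hAmeas.pow_const 2).const_mul _).stronglyMeasurable).integral_prod_right'
  -- pointwise bound on the statistic
  have hsq : ∀ S : ℝ, (S / (Real.sqrt R * Real.sqrt σ2)) ^ 2 = S ^ 2 / ((R:ℝ)*σ2) := by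
    intro S
    rw [div_pow, mul_pow, Real.sq_sqrt (Nat.cast_nonneg R), Real.sq_sqrt hσ2pos.le]
  have hSGbd : ∀ ω u, |∑ j ∈ Finset.range R,
      ((if ξ j ω ≤ u / φ R then (1:ℝ) else 0) - G0)| ≤ (R:ℝ) := by
    intro ω u
    calc |∑ j ∈ Finset.range R, ((if ξ j ω ≤ u / φ R then (1:ℝ) else 0) - G0)|
        ≤ ∑ j ∈ Finset.range R, |(if ξ j ω ≤ u / φ R then (1:ℝ) else 0) - G0| :=
          Finset.abs_sum_le_sum_abs _ _
      _ ≤ ∑ j ∈ Finset.range R, 1 := by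
          refine Finset.sum_le_sum (fun j _ => ?_)
          rw [abs_le]
          by_cases h : ξ j ω ≤ u / φ R <;> simp [h] <;> constructor <;> linarith
      _ = (R:ℝ) := by simp
  have hSGmeas : ∀ ω, Measurable (fun u => ∑ j ∈ Finset.range R,
      ((if ξ j ω ≤ u / φ R then (1:ℝ) else 0) - G0)) := by
    intro ω
    apply Finset.measurable_sum
    intro j _
    refine Measurable.sub ?_ measurable_const
    exact Measurable.ite (measurableSet_le measurable_const (measurable_id.div_const _))
      measurable_const measurable_const
  have hLint : ∀ ω, Integrable (fun u => (∑ j ∈ Finset.range R,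
      ((if ξ j ω ≤ u / φ R then (1:ℝ) else 0) - G0)) ^ 2 / ((R:ℝ)*σ2)) F := by
    intro ω
    refine Integrable.mono' (integrable_const ((R:ℝ)^2 / ((R:ℝ)*σ2)))
      (((hSGmeas ω).pow_const 2).div_const _).aestronglyMeasurable ?_
    filter_upwards with u
    rw [Real.norm_eq_abs, abs_div, abs_of_nonneg (sq_nonneg _),
      abs_of_nonneg (by positivity : (0:ℝ) ≤ (R:ℝ)*σ2)]
    have hb2 : (∑ j ∈ Finset.range R, ((if ξ j ω ≤ u / φ R then (1:ℝ) else 0) - G0)) ^ 2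
        ≤ (R:ℝ) ^ 2 := by
      rw [← sq_abs]
      exact pow_le_pow_left₀ (abs_nonneg _) (hSGbd ω u) 2
    exact div_le_div₀ (by positivity) hb2 (by positivity) le_rfl
  have hpoint : ∀ ω, randStat ξ R G0 F (φ R) ω ≤ θA ω + b := by
    intro ω
    have hptw : ∀ u, (∑ j ∈ Finset.range R,
        ((if ξ j ω ≤ u / φ R then (1:ℝ) else 0) - G0)) ^ 2 / ((R:ℝ)*σ2)
        ≤ (2/((R:ℝ)*σ2)) * A (ω,u) ^ 2 + (2*mG^2*C^2/σ2) * u ^ 2 := by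
      intro u
      have h1 : ∀ c : ℝ, ∑ j ∈ Finset.range R, ((if ξ j ω ≤ u / φ R then (1:ℝ) else 0) - c)
          = (∑ j ∈ Finset.range R, (if ξ j ω ≤ u / φ R then (1:ℝ) else 0)) - (R:ℝ) * c := by
        intro c
        rw [Finset.sum_sub_distrib, Finset.sum_const, Finset.card_range, nsmul_eq_mul]
      have hsum : (∑ j ∈ Finset.range R, ((if ξ j ω ≤ u / φ R then (1:ℝ) else 0) - G0))
          = A (ω,u) + (R:ℝ) * (p (u / φ R) - G0) := by
        rw [h1 G0]
        have h2 : A (ω,u) = (∑ j ∈ Finset.range R,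
            (if ξ j ω ≤ u / φ R then (1:ℝ) else 0)) - (R:ℝ) * p (u / φ R) := by
          simp only [hAdef]
          exact h1 (p (u / φ R))
        rw [h2]
        ring
      set a := A (ω,u) with hadef
      set e := p (u / φ R) - G0 with hedef
      have he : |e| ≤ mG * |u| / φ R := by
        rw [hedef, hG0p]
        calc |p (u / φ R) - p 0| ≤ mG * |u / φ R| := hpdiff _
          _ = mG * |u| / φ R := by
              rw [abs_div, abs_of_pos hφR]
              ring
      have hCsq : (R:ℝ) / (φ R) ^ 2 ≤ C ^ 2 := by
        have h3 : (Real.sqrt R / φ R) ^ 2 ≤ C ^ 2 :=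
          pow_le_pow_left₀ (div_nonneg (Real.sqrt_nonneg _) hφR.le) (hφC R) 2
        rwa [div_pow, Real.sq_sqrt (Nat.cast_nonneg R)] at h3
      have h4 : (a + (R:ℝ)*e) ^ 2 ≤ 2*a^2 + 2*(R:ℝ)^2*e^2 := by
        nlinarith [sq_nonneg (a - (R:ℝ)*e)]
      have h6 : e ^ 2 ≤ (mG * |u| / φ R) ^ 2 := by
        rw [← sq_abs]
        exact pow_le_pow_left₀ (abs_nonneg e) he 2
      have h5 : (R:ℝ) * e ^ 2 ≤ mG^2*C^2*u^2 := by
        have h7 : (mG * |u| / φ R) ^ 2 = mG^2 * u^2 * (1/(φ R)^2) := by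
          rw [div_pow, mul_pow, sq_abs]
          ring
        calc (R:ℝ) * e ^ 2 ≤ (R:ℝ) * (mG^2 * u^2 * (1/(φ R)^2)) := by
              apply mul_le_mul_of_nonneg_left _ (Nat.cast_nonneg R)
              rw [← h7]
              exact h6
          _ = mG^2 * u^2 * ((R:ℝ)/(φ R)^2) := by ring
          _ ≤ mG^2 * u^2 * C^2 := mul_le_mul_of_nonneg_left hCsq (by positivity)
          _ = mG^2*C^2*u^2 := by ring
      have h10 : (R:ℝ)*((R:ℝ)*e^2) ≤ (R:ℝ)*(mG^2*C^2*u^2) :=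
        mul_le_mul_of_nonneg_left h5 (Nat.cast_nonneg R)
      have h9 : (R:ℝ)^2*e^2 = (R:ℝ)*((R:ℝ)*e^2) := by ring
      have h8 : (a + (R:ℝ)*e) ^ 2 ≤ 2*a^2 + 2*(R:ℝ)*(mG^2*C^2*u^2) := by linarith
      rw [hsum]
      calc (a + (R:ℝ)*e) ^ 2 / ((R:ℝ)*σ2)
          ≤ (2*a^2 + 2*(R:ℝ)*(mG^2*C^2*u^2)) / ((R:ℝ)*σ2) :=
            div_le_div₀ (by positivity) h8 (by positivity) le_rfl
        _ = (2/((R:ℝ)*σ2)) * a ^ 2 + (2*mG^2*C^2/σ2) * u ^ 2 := by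
            field_simp
    have hRHSint : Integrable
        (fun u => (2/((R:ℝ)*σ2)) * A (ω,u) ^ 2 + (2*mG^2*C^2/σ2) * u ^ 2) F :=
      (hfi_all ω).add (hu2int.const_mul _)
    calc randStat ξ R G0 F (φ R) ω
        = ∫ u, (∑ j ∈ Finset.range R,
            ((if ξ j ω ≤ u / φ R then (1:ℝ) else 0) - G0)) ^ 2 / ((R:ℝ)*σ2) ∂F := by
          simp only [randStat, ← hσ2def]
          simp_rw [hsq]
      _ ≤ ∫ u, ((2/((R:ℝ)*σ2)) * A (ω,u) ^ 2 + (2*mG^2*C^2/σ2) * u ^ 2) ∂F :=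
          integral_mono (hLint ω) hRHSint hptw
      _ = θA ω + b := by
          have h2int : Integrable (fun u : ℝ => (2*mG^2*C^2/σ2) * u ^ 2) F := hu2int.const_mul _
          rw [integral_add (hfi_all ω) h2int]
          congr 1
          exact integral_const_mul _ _
  -- nonnegativity of the statistic
  have hrand_nonneg : ∀ ω, 0 ≤ randStat ξ R G0 F (φ R) ω := fun ω =>
    integral_nonneg fun u => sq_nonneg _
  -- Jensen
  have hJ : ∀ ω, θA ω ^ n ≤ (2/((R:ℝ)*σ2))^n * ∫ u, A (ω,u) ^ (2*n) ∂F := by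
    intro ω
    have hgi : Integrable (fun u => ((2/((R:ℝ)*σ2)) * A (ω,u) ^ 2) ^ n) F := by
      refine Integrable.mono' (integrable_const (((2/((R:ℝ)*σ2)) * (R:ℝ)^2)^n))
        ((((hAsec ω).pow_const 2).const_mul _).pow_const n).aestronglyMeasurable ?_
      filter_upwards with u
      rw [Real.norm_eq_abs, abs_pow]
      apply pow_le_pow_left₀ (abs_nonneg _)
      rw [abs_mul, abs_of_nonneg hcnn, abs_of_nonneg (sq_nonneg _)]
      exact mul_le_mul_of_nonneg_left (hA2bd (ω,u)) hcnn
    have hmem : ∀ᵐ u ∂F, (2/((R:ℝ)*σ2)) * A (ω,u) ^ 2 ∈ Set.Ici (0:ℝ) := by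
      filter_upwards with u
      exact Set.mem_Ici.mpr (by positivity)
    have hjen := (convexOn_pow n).map_average_le (continuous_pow n).continuousOn
      isClosed_Ici hmem (hfi_all ω) hgi
    rw [average_eq_integral, average_eq_integral] at hjen
    calc θA ω ^ n ≤ ∫ u, ((2/((R:ℝ)*σ2)) * A (ω,u) ^ 2) ^ n ∂F := hjen
      _ = (2/((R:ℝ)*σ2))^n * ∫ u, A (ω,u) ^ (2*n) ∂F := by
          simp_rw [mul_pow, ← pow_mul]
          rw [integral_const_mul]
  -- Fubini
  have hprodint : Integrable (fun x : Ω × ℝ => A x ^ (2*n)) (μ.prod F) := by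
    refine Integrable.mono' (integrable_const ((R:ℝ)^(2*n)))
      (hAmeas.pow_const _).aestronglyMeasurable ?_
    filter_upwards with x
    rw [Real.norm_eq_abs, abs_pow]
    exact pow_le_pow_left₀ (abs_nonneg _) (hAbd x) _
  have hswap : ∫ ω, (∫ u, A (ω,u) ^ (2*n) ∂F) ∂μ = ∫ u, (∫ ω, A (ω,u) ^ (2*n) ∂μ) ∂F :=
    integral_integral_swap hprodint
  have hinner : ∀ u, ∫ ω, A (ω,u) ^ (2*n) ∂μ ≤ momC n * (R:ℝ)^n := by
    intro u
    simp only [hAdef]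
    exact hmom (u / φ R) n R
  have hinner_nonneg : ∀ u, 0 ≤ ∫ ω, A (ω,u) ^ (2*n) ∂μ := fun u =>
    integral_nonneg fun ω => by rw [pow_mul]; positivity
  have hAsecInt : ∀ ω, Integrable (fun u => A (ω,u) ^ (2*n)) F := by
    intro ω
    refine Integrable.mono' (integrable_const ((R:ℝ)^(2*n)))
      ((hAsec ω).pow_const _).aestronglyMeasurable ?_
    filter_upwards with u
    rw [Real.norm_eq_abs, abs_pow]
    exact pow_le_pow_left₀ (abs_nonneg _) (hAbd (ω,u)) _
  have hθint : Integrable (fun ω => (2/((R:ℝ)*σ2))^n * ∫ u, A (ω,u) ^ (2*n) ∂F) μ := by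
    apply Integrable.const_mul
    refine Integrable.mono' (integrable_const ((R:ℝ)^(2*n)))
      ((hAmeas.pow_const (2*n)).stronglyMeasurable.integral_prod_right').aestronglyMeasurable ?_
    filter_upwards with ω
    rw [Real.norm_eq_abs]
    calc |∫ u, A (ω,u) ^ (2*n) ∂F| ≤ ∫ u, |A (ω,u) ^ (2*n)| ∂F := by
          simpa [Real.norm_eq_abs] using
            norm_integral_le_integral_norm (μ := F) (fun u => A (ω,u) ^ (2*n))
      _ ≤ ∫ _u, (R:ℝ)^(2*n) ∂F := by
          refine integral_mono (hAsecInt ω).abs (integrable_const _) (fun u => ?_)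
          rw [abs_pow]
          exact pow_le_pow_left₀ (abs_nonneg _) (hAbd (ω,u)) _
      _ = (R:ℝ)^(2*n) := by simp
  have hθAn : ∫ ω, θA ω ^ n ∂μ ≤ (2/σ2)^n * momC n := by
    calc ∫ ω, θA ω ^ n ∂μ
        ≤ ∫ ω, (2/((R:ℝ)*σ2))^n * ∫ u, A (ω,u) ^ (2*n) ∂F ∂μ :=
          integral_mono_of_nonneg
            (Filter.Eventually.of_forall fun ω => pow_nonneg (hθA_nonneg ω) n) hθint
            (Filter.Eventually.of_forall hJ)
      _ = (2/((R:ℝ)*σ2))^n * ∫ u, (∫ ω, A (ω,u) ^ (2*n) ∂μ) ∂F := by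
          rw [integral_const_mul, hswap]
      _ ≤ (2/((R:ℝ)*σ2))^n * (momC n * (R:ℝ)^n) := by
          apply mul_le_mul_of_nonneg_left _ (by positivity)
          calc ∫ u, (∫ ω, A (ω,u) ^ (2*n) ∂μ) ∂F ≤ ∫ _u, momC n * (R:ℝ)^n ∂F :=
                integral_mono_of_nonneg (Filter.Eventually.of_forall hinner_nonneg)
                  (integrable_const _) (Filter.Eventually.of_forall hinner)
            _ = momC n * (R:ℝ)^n := by simp
      _ = (2/σ2)^n * momC n := by
          have hcomb : (2/((R:ℝ)*σ2)) * (R:ℝ) = 2/σ2 := by field_simp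
          calc (2/((R:ℝ)*σ2))^n * (momC n * (R:ℝ)^n)
              = ((2/((R:ℝ)*σ2)) * (R:ℝ))^n * momC n := by rw [mul_pow]; ring
            _ = (2/σ2)^n * momC n := by rw [hcomb]
  -- final chain
  have hθAn_int : Integrable (fun ω => θA ω ^ n) μ := by
    refine Integrable.mono' (integrable_const (((2/((R:ℝ)*σ2)) * (R:ℝ)^2)^n))
      ((hθA_meas.measurable.pow_const n).aestronglyMeasurable) ?_
    filter_upwards with ω
    rw [Real.norm_eq_abs, abs_pow, abs_of_nonneg (hθA_nonneg ω)]
    exact pow_le_pow_left₀ (hθA_nonneg ω) (hθA_bd ω) n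
  have hmajint : Integrable (fun ω => 2^((2:ℝ)+δ) * (1 + θA ω ^ n + b^((2:ℝ)+δ))) μ := by
    apply Integrable.const_mul
    exact ((integrable_const 1).add hθAn_int).add (integrable_const _)
  calc ∫ ω, |randStat ξ R G0 F (φ R) ω| ^ ((2:ℝ)+δ) ∂μ
      ≤ ∫ ω, 2^((2:ℝ)+δ) * (1 + θA ω ^ n + b^((2:ℝ)+δ)) ∂μ := by
        refine integral_mono_of_nonneg
          (Filter.Eventually.of_forall fun ω => Real.rpow_nonneg (abs_nonneg _) _) hmajint
          (Filter.Eventually.of_forall fun ω => ?_)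
        have h0 := hrand_nonneg ω
        calc |randStat ξ R G0 F (φ R) ω| ^ ((2:ℝ)+δ)
            = (randStat ξ R G0 F (φ R) ω) ^ ((2:ℝ)+δ) := by rw [abs_of_nonneg h0]
          _ ≤ (θA ω + b) ^ ((2:ℝ)+δ) := Real.rpow_le_rpow h0 (hpoint ω) hp0'
          _ ≤ 2^((2:ℝ)+δ) * ((θA ω)^((2:ℝ)+δ) + b^((2:ℝ)+δ)) :=
              rpow_add_le_two_rpow (hθA_nonneg ω) hb0 hp0'
          _ ≤ 2^((2:ℝ)+δ) * (1 + θA ω ^ n + b^((2:ℝ)+δ)) := by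
              apply mul_le_mul_of_nonneg_left _ (Real.rpow_nonneg (by norm_num) _)
              have := rpow_le_one_add_pow (hθA_nonneg ω) hp0' hn
              linarith
    _ = 2^((2:ℝ)+δ) * (1 + (∫ ω, θA ω ^ n ∂μ) + b^((2:ℝ)+δ)) := by
        have h1 : Integrable (fun ω => 1 + θA ω ^ n) μ := (integrable_const 1).add hθAn_int
        rw [integral_const_mul, integral_add h1 (integrable_const _),
          integral_add (integrable_const 1) hθAn_int]
        simp
    _ ≤ 2^((2:ℝ)+δ) * (1 + (2/σ2)^n * momC n + b^((2:ℝ)+δ)) := by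
        apply mul_le_mul_of_nonneg_left _ (Real.rpow_nonneg (by norm_num) _)
        linarith
end
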